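/- (Theorem 2: CD may score a prefix of the optimal sequence below another prefix.) There exist a nonempty finite type τ, n : ℕ, an index i with 0 < i < n, three pairwise distinct lists y*, y', y'' over τ of length n with y*.take (i−1) = y'.take (i−1), y*.take i ≠ y'.take i, and y*.take i = y''.take i, a reward r : List τ → ℝ with r y* = 6, r y' = 4, r y'' = −6 and r y* > r y for every list y of length n with y ≠ y* (so y* is the unique optimal response), and continuation weights π such that π assigns probability 1/2 to each of the two length-(n−i) continuations of y*.take i given by y* and y'', and probability 1 to the length-(n−i) continuation of y'.take i given by y', for which the CD target values satisfy V*(y*.take i) = 0 and V*(y'.take i) = 4, hence V*(y*.take i) < V*(y'.take i). -/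

import Mathlib

/-- CD target value of a partial sequence `s`: the `π`-weighted average of the rewards
`r (s ++ e)` over all continuations `e` of length `n - s.length` (continuations are
enumerated as `List.ofFn e` for `e : Fin (n - s.length) → τ`), where `π` gives the
base-model continuation weight of each continuation. -/
noncomputable def cdValue {τ : Type*} [Fintype τ] (n : ℕ) (r : List τ → ℝ)
    (π : List τ → ℝ) (s : List τ) : ℝ :=
  ∑ e : Fin (n - s.length) → τ, π (List.ofFn e) * r (s ++ List.ofFn e)

/-- Theorem 2 (CD may score a prefix of the optimal sequence below another prefix):
there are a nonempty finite vocabulary `τ`, a length `n`, an index `0 < i < n`, three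
pairwise distinct full sequences `y*, y', y''` of length `n` with
`y*.take (i−1) = y'.take (i−1)`, `y*.take i ≠ y'.take i`, `y*.take i = y''.take i`,
a reward `r` with `r y* = 6`, `r y' = 4`, `r y'' = −6`, and `r y* > r y` for every
other full sequence `y` (so `y*` is the unique optimal response), and nonnegative
continuation weights `π` (indexed by prefix) assigning probability `1/2` to each of the
continuations of `y*.take i` given by `y*` and `y''` (and `0` to all other continuations
of length `n − i`), and probability `1` to the continuation of `y'.take i` given by `y'`
(and `0` to all others), such that the CD target values satisfy `V*(y*.take i) = 0` and
`V*(y'.take i) = 4`, hence `V*(y*.take i) < V*(y'.take i)`. -/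
lemma sum_fn1 (g : (Fin 1 → Bool) → ℝ) :
    ∑ f : Fin 1 → Bool, g f = g (fun _ => true) + g (fun _ => false) := by
  rw [← (Equiv.funUnique (Fin 1) Bool).symm.sum_comp]
  exact Fintype.sum_bool _

theorem cd_counterexample :
    ∃ (τ : Type) (instF : Fintype τ) (_ : Nonempty τ) (n i : ℕ)
      (ystar y' y'' : List τ) (r : List τ → ℝ) (π : List τ → List τ → ℝ),
      0 < i ∧ i < n ∧
      ystar.length = n ∧ y'.length = n ∧ y''.length = n ∧
      ystar ≠ y' ∧ ystar ≠ y'' ∧ y' ≠ y'' ∧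
      ystar.take (i - 1) = y'.take (i - 1) ∧ ystar.take i ≠ y'.take i ∧
      ystar.take i = y''.take i ∧
      r ystar = 6 ∧ r y' = 4 ∧ r y'' = -6 ∧
      (∀ y : List τ, y.length = n → y ≠ ystar → r y < r ystar) ∧
      (∀ s e : List τ, 0 ≤ π s e) ∧
      π (ystar.take i) (ystar.drop i) = 1 / 2 ∧
      π (ystar.take i) (y''.drop i) = 1 / 2 ∧
      (∀ e : List τ, e.length = n - i → e ≠ ystar.drop i → e ≠ y''.drop i →
        π (ystar.take i) e = 0) ∧
      π (y'.take i) (y'.drop i) = 1 ∧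
      (∀ e : List τ, e.length = n - i → e ≠ y'.drop i → π (y'.take i) e = 0) ∧
      @cdValue τ instF n r (π (ystar.take i)) (ystar.take i) = 0 ∧
      @cdValue τ instF n r (π (y'.take i)) (y'.take i) = 4 ∧
      @cdValue τ instF n r (π (ystar.take i)) (ystar.take i) <
        @cdValue τ instF n r (π (y'.take i)) (y'.take i) := by

  classical
  refine ⟨Bool, inferInstance, ⟨true⟩, 2, 1, [true, true], [false, false], [true, false],
    (fun y => if y = [true, true] then 6 else if y = [false, false] then 4
      else if y = [true, false] then -6 else 0),
    (fun s e => if s = [true] then 1/2 else if s = [false] then (if e = [false] then 1 else 0) else 0),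
    ?_, ?_, ?_, ?_, ?_, ?_, ?_, ?_, ?_, ?_, ?_, ?_, ?_, ?_, ?_, ?_, ?_, ?_, ?_, ?_, ?_, ?_, ?_, ?_⟩
  · norm_num
  · norm_num
  · rfl
  · rfl
  · rfl
  · simp
  · simp
  · simp
  · rfl
  · simp
  · rfl
  · norm_num
  · norm_num
  · norm_num
  · intro y hlen hne
    simp only [if_neg hne]
    split_ifs <;> norm_num
  · intro s e
    dsimp only
    split_ifs <;> norm_num
  · norm_num
  · norm_num
  · intro e hlen h1 h2
    simp at h1 h2
    rcases e with _ | ⟨a, e⟩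
    · simp at hlen
    · rcases e with _ | ⟨b, e⟩
      · cases a
        · exact absurd rfl h2
        · exact absurd rfl h1
      · simp at hlen
  · norm_num
  · intro e hlen hne
    have h : e ≠ [false] := by simpa using hne
    simp [h]
  · show (∑ e : Fin 1 → Bool, _) = 0
    rw [sum_fn1]
    simp (config := {decide := true})
  · show (∑ e : Fin 1 → Bool, _) = 4
    rw [sum_fn1]
    simp (config := {decide := true})
  · show (∑ e : Fin 1 → Bool, _) < (∑ e : Fin 1 → Bool, _)
    rw [sum_fn1, sum_fn1]
    simp (config := {decide := true})
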